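/- The implicit embedded method of SSP-LDIRK2(3,3,2) is A-stable but not L-stable: with A = [[1/4,0,0],[0,1/4,0],[1/3,1/3,1/3]] and embedded weights b̂ = (7/41, 13/33, 589/1353), for every z ∈ ℂ with Re z ≤ 0 the matrix I − zA is invertible and the embedded stability function R̂(z) = 1 + z·b̂ᵀ(I − zA)⁻¹𝟙 satisfies |R̂(z)| ≤ 1; moreover b̂ᵀA⁻¹𝟙 ≠ 1, so R̂(z) does not tend to 0 as |z| → ∞. -/

import Mathlib

open Matrix

noncomputable def Mz (z : ℂ) : Matrix (Fin 3) (Fin 3) ℂ :=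
  1 - z • ((!![1/4, 0, 0; 0, 1/4, 0; 1/3, 1/3, 1/3] : Matrix (Fin 3) (Fin 3) ℝ).map Complex.ofReal)

lemma Mz_eq (z : ℂ) : Mz z = !![1 - z/4, 0, 0; 0, 1 - z/4, 0; -z/3, -z/3, 1 - z/3] := by
  ext i j
  fin_cases i <;> fin_cases j <;>
    simp [Mz, Matrix.one_apply] <;> ring

lemma Mz_isUnit (z : ℂ) (h1 : 1 - z/4 ≠ 0) (h2 : 1 - z/3 ≠ 0) : IsUnit (Mz z) := by
  rw [Mz_eq, Matrix.isUnit_iff_isUnit_det, Matrix.det_fin_three]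
  simp only [isUnit_iff_ne_zero]
  simp
  exact ⟨h1, h2⟩

lemma Mz_inv (z : ℂ) (h1 : 1 - z/4 ≠ 0) (h2 : 1 - z/3 ≠ 0) :
    (Mz z)⁻¹ = !![(1-z/4)⁻¹, 0, 0; 0, (1-z/4)⁻¹, 0;
      z/(3*(1-z/4)*(1-z/3)), z/(3*(1-z/4)*(1-z/3)), (1-z/3)⁻¹] := by
  have h1' : (4 : ℂ) - z ≠ 0 := fun h => h1 (by rw [sub_eq_zero] at h ⊢; rw [← h]; ring)
  have h2' : (3 : ℂ) - z ≠ 0 := fun h => h2 (by rw [sub_eq_zero] at h ⊢; rw [← h]; ring)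
  have hq : (108 : ℂ) - z * 63 + z ^ 2 * 9 ≠ 0 := by
    have : (108 : ℂ) - z * 63 + z ^ 2 * 9 = 9 * ((4 - z) * (3 - z)) := by ring
    rw [this]; exact mul_ne_zero (by norm_num) (mul_ne_zero h1' h2')
  apply Matrix.inv_eq_right_inv
  rw [Mz_eq]
  ext i j
  fin_cases i <;> fin_cases j <;>
    · simp only [Matrix.mul_apply, Fin.sum_univ_three, Matrix.one_apply, Matrix.cons_val',
        Matrix.cons_val_zero, Matrix.cons_val_one, Matrix.head_cons, Matrix.empty_val',
        Matrix.cons_val_fin_one, Matrix.head_fin_const, Matrix.cons_val_two, Matrix.tail_cons, Matrix.cons_val]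
      simp [Fin.ext_iff] <;> field_simp [h1', h2', hq] <;> ring

set_option maxHeartbeats 1000000 in
lemma Rhat_eq (z : ℂ) (h1 : 1 - z/4 ≠ 0) (h2 : 1 - z/3 ≠ 0) :
    1 + z * ((fun i => ((![7/41, 13/33, 589/1353] : Fin 3 → ℝ) i : ℂ)) ⬝ᵥ ((Mz z)⁻¹ *ᵥ 1)) =
      (1 + 5*z/12 + 69*z^2/902) / (1 - 7*z/12 + z^2/12) := by
  rw [Mz_inv z h1 h2]
  simp [Matrix.mulVec, dotProduct, Fin.sum_univ_three]
  push_cast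
  obtain ⟨a, ha⟩ : ∃ a : ℂ, 1 - z/4 = a := ⟨_, rfl⟩
  obtain ⟨b, hb⟩ : ∃ b : ℂ, 1 - z/3 = b := ⟨_, rfl⟩
  have hab : (1 : ℂ) - 7*z/12 + z^2/12 = a * b := by rw [← ha, ← hb]; ring
  rw [ha] at h1
  rw [hb] at h2
  rw [hab, ha, hb]
  rw [eq_div_iff (mul_ne_zero h1 h2)]
  have ia : a * a⁻¹ = 1 := mul_inv_cancel₀ h1
  have ib : b * b⁻¹ = 1 := mul_inv_cancel₀ h2
  linear_combination (764/1353*z*b + 1178/4059*z^2*(b*b⁻¹)) * ia + (589/1353*z*a + 1178/4059*z^2) * ib - (589/1353*z) * ha - (764/1353*z) * hb - hab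

lemma ne4 (z : ℂ) (hz : z.re ≤ 0) : 1 - z/4 ≠ 0 := by
  intro h
  rw [sub_eq_zero] at h
  have h4 : z = 4 := by
    field_simp at h
    simp [h]
  rw [h4] at hz
  norm_num at hz

lemma ne3 (z : ℂ) (hz : z.re ≤ 0) : 1 - z/3 ≠ 0 := by
  intro h
  rw [sub_eq_zero] at h
  have h3 : z = 3 := by
    field_simp at h
    simp [h]
  rw [h3] at hz
  norm_num at hz

lemma normSq_quad (p q : ℝ) (z : ℂ) :
    Complex.normSq (1 + (p : ℂ)*z + (q : ℂ)*z^2) =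
      (1 + p*z.re + q*(z.re^2 - z.im^2))^2 + (p*z.im + 2*q*z.re*z.im)^2 := by
  rw [Complex.normSq_apply]
  simp [Complex.add_re, Complex.add_im, Complex.mul_re, Complex.mul_im, sq]
  ring

lemma abs_ratio_le (z : ℂ) (hz : z.re ≤ 0) :
    ‖(1 + 5*z/12 + 69*z^2/902) / (1 - 7*z/12 + z^2/12)‖ ≤ 1 := by
  have h1' : (4 : ℂ) - z ≠ 0 := fun h => (ne4 z hz) (by rw [sub_eq_zero] at h ⊢; rw [← h]; ring)
  have h2' : (3 : ℂ) - z ≠ 0 := fun h => (ne3 z hz) (by rw [sub_eq_zero] at h ⊢; rw [← h]; ring)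
  have hd : (1 : ℂ) - 7*z/12 + z^2/12 ≠ 0 := by
    have h : (1 : ℂ) - 7*z/12 + z^2/12 = ((4 - z) * (3 - z)) / 12 := by ring
    rw [h]
    exact div_ne_zero (mul_ne_zero h1' h2') (by norm_num)
  have e1 : (1 : ℂ) + 5*z/12 + 69*z^2/902 = 1 + (((5/12 : ℝ)) : ℂ)*z + (((69/902 : ℝ)) : ℂ)*z^2 := by
    push_cast; ring
  have e2 : (1 : ℂ) - 7*z/12 + z^2/12 = 1 + (((-7/12 : ℝ)) : ℂ)*z + (((1/12 : ℝ)) : ℂ)*z^2 := by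
    push_cast; ring
  rw [norm_div, div_le_one (norm_pos_iff.mpr hd), e1, e2]
  rw [Complex.norm_def, Complex.norm_def]
  apply Real.sqrt_le_sqrt
  rw [normSq_quad, normSq_quad]
  set x := z.re
  set y := z.im
  nlinarith [sq_nonneg x, sq_nonneg y, sq_nonneg (x*y), sq_nonneg (x^2), sq_nonneg (y^2),
    mul_nonneg (neg_nonneg.mpr hz) (add_nonneg (sq_nonneg x) (sq_nonneg y)), hz,
    sq_nonneg (x^2 + y^2), mul_nonneg (mul_nonneg (neg_nonneg.mpr hz) (neg_nonneg.mpr hz)) (sq_nonneg y)]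

lemma Ainv : (!![1/4, 0, 0; 0, 1/4, 0; 1/3, 1/3, 1/3] : Matrix (Fin 3) (Fin 3) ℝ)⁻¹ =
    !![4, 0, 0; 0, 4, 0; -4, -4, 3] := by
  apply Matrix.inv_eq_right_inv
  ext i j
  fin_cases i <;> fin_cases j <;>
    simp [Matrix.mul_apply, Fin.sum_univ_three, Matrix.one_apply] <;> norm_num

lemma part2 : (![7/41, 13/33, 589/1353] : Fin 3 → ℝ) ⬝ᵥ
    ((!![1/4, 0, 0; 0, 1/4, 0; 1/3, 1/3, 1/3] : Matrix (Fin 3) (Fin 3) ℝ)⁻¹ *ᵥ 1) ≠ 1 := by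
  rw [Ainv]
  simp [Matrix.mulVec, dotProduct, Fin.sum_univ_three]
  norm_num

lemma tendsto_neg_cast :
    Filter.Tendsto (fun t : ℝ => (-(t : ℂ))) Filter.atTop (Filter.comap (fun w : ℂ => ‖w‖) Filter.atTop) := by
  rw [Filter.tendsto_comap_iff]
  have h : ((fun w : ℂ => ‖w‖) ∘ fun t : ℝ => (-(t : ℂ))) = fun t : ℝ => |t| := by
    funext t; simp
  rw [h]
  exact Filter.tendsto_abs_atTop_atTop

lemma low (t : ℝ) (ht : 100 ≤ t) :
    1/2 ≤ ‖(1 + 5*(-(t:ℂ))/12 + 69*(-(t:ℂ))^2/902) / (1 - 7*(-(t:ℂ))/12 + (-(t:ℂ))^2/12)‖ := by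
  have en : (1 : ℂ) + 5*(-(t:ℂ))/12 + 69*(-(t:ℂ))^2/902 = ((1 - 5*t/12 + 69*t^2/902 : ℝ) : ℂ) := by
    push_cast; ring
  have ed : (1 : ℂ) - 7*(-(t:ℂ))/12 + (-(t:ℂ))^2/12 = ((1 + 7*t/12 + t^2/12 : ℝ) : ℂ) := by
    push_cast; ring
  rw [en, ed, ← Complex.ofReal_div, Complex.norm_real, Real.norm_eq_abs]
  have hN : (0:ℝ) ≤ 1 - 5*t/12 + 69*t^2/902 := by nlinarith
  have hD : (0:ℝ) < 1 + 7*t/12 + t^2/12 := by nlinarith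
  rw [abs_of_nonneg (div_nonneg hN hD.le), le_div_iff₀ hD]
  nlinarith

theorem stmt_13 :
    let g : ℝ := 1 - Real.sqrt 2 / 2
    let A : Matrix (Fin 3) (Fin 3) ℝ := !![1/4, 0, 0; 0, 1/4, 0; 1/3, 1/3, 1/3]
    let bhat : Fin 3 → ℝ := ![7/41, 13/33, 589/1353]
    let AC : Matrix (Fin 3) (Fin 3) ℂ := A.map Complex.ofReal
    let bC : Fin 3 → ℂ := fun i => (bhat i : ℂ)
    let Rhat : ℂ → ℂ := fun z => 1 + z * (bC ⬝ᵥ ((1 - z • AC)⁻¹ *ᵥ 1))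
    (∀ z : ℂ, z.re ≤ 0 → IsUnit (1 - z • AC) ∧ ‖Rhat z‖ ≤ 1) ∧
      bhat ⬝ᵥ (A⁻¹ *ᵥ 1) ≠ 1 ∧
      ¬ Filter.Tendsto Rhat (Filter.comap (fun w : ℂ => ‖w‖) Filter.atTop) (nhds 0) := by
  intro g A bhat AC bC Rhat
  have hM : ∀ z : ℂ, (1 : Matrix (Fin 3) (Fin 3) ℂ) - z • AC = Mz z := fun z => rfl
  have hRhat : ∀ z : ℂ, (1 - z/4 ≠ 0) → (1 - z/3 ≠ 0) →
      Rhat z = (1 + 5*z/12 + 69*z^2/902) / (1 - 7*z/12 + z^2/12) := by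
    intro z h1 h2
    show 1 + z * (bC ⬝ᵥ ((1 - z • AC)⁻¹ *ᵥ 1)) = _
    rw [hM z]
    exact Rhat_eq z h1 h2
  refine ⟨?_, ?_, ?_⟩
  · intro z hz
    refine ⟨?_, ?_⟩
    · rw [hM z]; exact Mz_isUnit z (ne4 z hz) (ne3 z hz)
    · rw [hRhat z (ne4 z hz) (ne3 z hz)]
      exact abs_ratio_le z hz
  · exact part2
  · intro hT
    have h2 := hT.comp tendsto_neg_cast
    have h3 := (Metric.tendsto_nhds.mp h2 (1/2) one_half_pos).and (Filter.eventually_ge_atTop (100 : ℝ))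
    obtain ⟨t, hlt, ht⟩ := h3.exists
    have hz : (-(t:ℂ)).re ≤ 0 := by simp; linarith
    have := low t ht
    rw [← hRhat _ (ne4 _ hz) (ne3 _ hz)] at this
    rw [Function.comp_apply, Complex.dist_eq, sub_zero] at hlt
    linarith
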